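/- arXiv:1504.01355 — 7 statements merged into one kernel-verified Lean document; each statement's English description precedes it below -/
import Mathlib

section
/- Let K ⊆ L be finite fields with [L:K] = m, and let C ⊆ Lⁿ be a K-linear MDS code with |C| = |L|^{k_L}. Let V₁,…,Vₙ ⊆ K^k be the column spaces of C (k = dim_K C = k_L·m). Then for every subset I ⊆ {1,…,n}, dim_K (Σ_{i∈I} Vᵢ) = m · min{k_L, |I|}. -/
/-- Column space of a family of codewords at coordinate `i`. -/
def columnSpace {K L : Type*} [Field K] [Field L] [Algebra K L]
    {m n : ℕ} {ι : Type*} (b : Module.Basis (Fin m) K L) (c : ι → (Fin n → L)) (i : Fin n) :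
    Submodule K (ι → K) :=
  Submodule.span K (Set.range fun j : Fin m => fun r : ι => b.repr (c r i) j)

/-- For a `K`-linear MDS code with `|C| = |L|^{k_L}`, the column spaces satisfy
`dim_K (Σ_{i ∈ I} Vᵢ) = m · min {k_L, |I|}` for every `I ⊆ {1,…,n}`. -/
theorem stmt_4 {K L : Type*} [Field K] [Field L] [Algebra K L]
    [Fintype K] [Fintype L] [DecidableEq L] {m n k d kL : ℕ}
    (hn : 0 < n) (b : Module.Basis (Fin m) K L)
    (C : Submodule K (Fin n → L)) (c : Fin k → (Fin n → L))
    (hli : LinearIndependent K c) (hspan : Submodule.span K (Set.range c) = C)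
    (hd_le : ∀ u ∈ C, u ≠ 0 → d ≤ hammingNorm u)
    (hd_eq : ∃ u ∈ C, u ≠ 0 ∧ hammingNorm u = d)
    (hkL : kL = n - d + 1) (hk : k = kL * m)
    (hMDS : Nat.card C = Fintype.card L ^ kL) :
    ∀ I : Finset (Fin n),
      Module.finrank K ↥(⨆ i ∈ I, columnSpace b c i) = m * min kL I.card := by
  classical
  intro I
  haveI : FiniteDimensional K L := Module.Finite.of_basis b
  have hm : Module.finrank K L = m := by
    rw [Module.finrank_eq_card_basis b, Fintype.card_fin]
  -- basic numeric facts about d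
  obtain ⟨u0, hu0C, hu0ne, hu0d⟩ := hd_eq
  have hd1 : 1 ≤ d := by
    have := hammingNorm_pos_iff.mpr hu0ne
    omega
  have hdn : d ≤ n := by
    have h := hammingNorm_le_card_fintype (x := u0)
    rw [hu0d, Fintype.card_fin] at h
    exact h
  have hkLn : kL ≤ n := by omega
  -- the linear combination map
  set T : (Fin k → K) →ₗ[K] (Fin n → L) := Fintype.linearCombination K c with hT
  have hTapp : ∀ x : Fin k → K, T x = ∑ r, x r • c r := fun x =>
    Fintype.linearCombination_apply K c x
  have hTmem : ∀ x, T x ∈ C := by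
    intro x
    rw [← hspan, hTapp]
    exact Submodule.sum_mem _ fun r _ =>
      Submodule.smul_mem _ _ (Submodule.subset_span ⟨r, rfl⟩)
  -- key injectivity: vanishing on kL coordinates forces zero
  have hinj : ∀ J : Finset (Fin n), kL ≤ J.card →
      ∀ x : Fin k → K, (∀ i ∈ J, T x i = 0) → x = 0 := by
    intro J hJ x hx
    have hTx : T x = 0 := by
      by_contra hTx
      have hd' := hd_le _ (hTmem x) hTx
      have hsub : ({i | T x i ≠ 0} : Finset (Fin n)) ⊆ Jᶜ := by
        intro i hi
        simp only [Finset.mem_compl]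
        intro hiJ
        rw [Finset.mem_filter] at hi
        exact hi.2 (hx i hiJ)
      have hle : hammingNorm (T x) ≤ n - J.card := by
        calc hammingNorm (T x) ≤ (Jᶜ : Finset (Fin n)).card := Finset.card_le_card hsub
          _ = n - J.card := by rw [Finset.card_compl, Fintype.card_fin]
      omega
    funext r
    refine Fintype.linearIndependent_iff.mp hli x ?_ r
    rw [← hTapp, hTx]
  -- the restriction maps
  have hψ : ∀ J : Finset (Fin n),
      ∃ ψ : (Fin k → K) →ₗ[K] (↥J → L), ∀ x i, ψ x i = T x ↑i :=
    fun J => ⟨(LinearMap.funLeft K L (fun i : ↥J => (i : Fin n))).comp T,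
      fun x i => rfl⟩
  -- compute the rank of the restricted map for our I
  obtain ⟨ψ, hψI⟩ := hψ I
  have hψker : ∀ x, (∀ i ∈ I, T x i = 0) ↔ ψ x = 0 := by
    intro x
    constructor
    · intro h; funext i; rw [hψI]; exact h i i.2
    · intro h i hi
      have := congrFun h ⟨i, hi⟩
      rwa [hψI] at this
  have hfinI : Module.finrank K (↥I → L) = I.card * m := by
    rw [Module.finrank_pi_fintype K, Finset.sum_const, smul_eq_mul, hm,
      Finset.card_univ, Fintype.card_coe]
  have hfinDom : Module.finrank K (Fin k → K) = k := by
    simp [Module.finrank_fintype_fun_eq_card]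
  have hrange : Module.finrank K ↥(LinearMap.range ψ) = m * min kL I.card := by
    rcases le_total kL I.card with hcase | hcase
    · -- kL ≤ |I| : ψ is injective, rank = k = kL * m
      have hker : LinearMap.ker ψ = ⊥ := by
        rw [LinearMap.ker_eq_bot']
        intro x hx
        exact hinj I hcase x ((hψker x).mpr hx)
      have := LinearMap.finrank_range_add_finrank_ker ψ
      rw [hker, finrank_bot, add_zero, hfinDom] at this
      rw [this, hk, min_eq_left hcase, mul_comm]
    · -- |I| ≤ kL : ψ is surjective
      obtain ⟨J, hIJ, hJcard⟩ := Finset.exists_superset_card_eq hcase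
        (by rw [Fintype.card_fin]; exact hkLn)
      obtain ⟨ψJ, hψJ⟩ := hψ J
      have hψJinj : Function.Injective ψJ := by
        rw [← LinearMap.ker_eq_bot, LinearMap.ker_eq_bot']
        intro x hx
        refine hinj J hJcard.ge x ?_
        intro i hi
        have := congrFun hx ⟨i, hi⟩
        rwa [hψJ] at this
      have hfinJ : Module.finrank K (↥J → L) = Module.finrank K (Fin k → K) := by
        rw [hfinDom, Module.finrank_pi_fintype K, Finset.sum_const, smul_eq_mul, hm,
          Finset.card_univ, Fintype.card_coe, hJcard, hk]
      have hψJsurj : Function.Surjective ψJ :=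
        (LinearMap.injective_iff_surjective_of_finrank_eq_finrank hfinJ.symm).mp hψJinj
      have hψsurj : Function.Surjective ψ := by
        intro y
        obtain ⟨x, hx⟩ := hψJsurj (fun j : ↥J => if h : (j : Fin n) ∈ I then y ⟨j, h⟩ else 0)
        refine ⟨x, ?_⟩
        funext i
        have := congrFun hx ⟨(i : Fin n), hIJ i.2⟩
        rw [hψJ] at this
        rw [hψI, this]
        simp [i.2]
      have : LinearMap.range ψ = ⊤ := LinearMap.range_eq_top.mpr hψsurj
      rw [this, finrank_top, hfinI, min_eq_right hcase, mul_comm]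
  -- the matrix whose rows are the column-space generators
  set M : Matrix (↥I × Fin m) (Fin k) K :=
    Matrix.of (fun p r => b.repr (c r ↑p.1) p.2) with hM
  -- the supremum of column spaces is the span of the rows of M
  have hsup : (⨆ i ∈ I, columnSpace b c i) = Submodule.span K (Set.range M) := by
    unfold columnSpace
    rw [← Submodule.span_iUnion₂]
    congr 1
    ext v
    simp only [Set.mem_iUnion, Set.mem_range, Prod.exists]
    constructor
    · rintro ⟨i, hi, j, rfl⟩
      exact ⟨(⟨i, hi⟩, j), rfl⟩
    · rintro ⟨⟨⟨i, hi⟩, j⟩, rfl⟩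
      exact ⟨i, hi, j, rfl⟩
  -- the span of the rows of M has the same dimension as the range of ψ
  have hMrank : Module.finrank K ↥(Submodule.span K (Set.range M)) = Matrix.rank M.transpose := by
    rw [Matrix.rank_eq_finrank_span_cols]; rfl
  have hMT : Matrix.rank M.transpose = Matrix.rank M := Matrix.rank_transpose M
  -- identify M.mulVecLin with ψ composed with an equivalence
  let e : (↥I → L) ≃ₗ[K] (↥I × Fin m → K) :=
    (LinearEquiv.piCongrRight (fun _ : ↥I => b.equivFun)).trans
      (LinearEquiv.curry K K ↥I (Fin m)).symm
  have hMe : M.mulVecLin = (e : (↥I → L) →ₗ[K] (↥I × Fin m → K)).comp ψ := by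
    apply LinearMap.ext
    intro x
    funext p
    obtain ⟨i, j⟩ := p
    have h1 : M.mulVecLin x (i, j) = ∑ r, b.repr (c r ↑i) j * x r := rfl
    rw [h1]
    have h2 : ((e : (↥I → L) →ₗ[K] (↥I × Fin m → K)).comp ψ) x (i, j)
        = b.repr (ψ x i) j := rfl
    rw [h2, hψI, hTapp]
    simp only [Finset.sum_apply, Pi.smul_apply, map_sum, Finsupp.coe_finset_sum]
    refine Finset.sum_congr rfl fun r _ => ?_
    rw [map_smul, Finsupp.smul_apply, smul_eq_mul, mul_comm]
  have hMrank2 : Matrix.rank M = Module.finrank K ↥(LinearMap.range ψ) := by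
    rw [Matrix.rank, hMe, LinearMap.range_comp]
    exact (LinearEquiv.finrank_map_eq e _)
  rw [hsup, hMrank, hMT, hMrank2, hrange]
end

section
/- Let K ⊆ L be finite fields and C ⊆ Lⁿ a K-linear MDS code with column spaces V₁,…,Vₙ ⊆ K^k (as defined via bases of C and of L over K) with k_L ≥ 2. Then for all i ≠ j, Vᵢ ∩ Vⱼ = {0}, and each Vᵢ has dim_K Vᵢ = m = [L:K]. -/
/-- For a `K`-linear MDS code with `k_L ≥ 2`, distinct column spaces intersect
trivially and every column space has dimension `m = [L:K]`. -/
theorem stmt_5 {K L : Type*} [Field K] [Field L] [Algebra K L]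
    [Fintype K] [Fintype L] [DecidableEq L] {m n k d kL : ℕ}
    (hn : 0 < n) (b : Module.Basis (Fin m) K L)
    (C : Submodule K (Fin n → L)) (c : Fin k → (Fin n → L))
    (hli : LinearIndependent K c) (hspan : Submodule.span K (Set.range c) = C)
    (hd_le : ∀ u ∈ C, u ≠ 0 → d ≤ hammingNorm u)
    (hd_eq : ∃ u ∈ C, u ≠ 0 ∧ hammingNorm u = d)
    (hkL : kL = n - d + 1) (hk : k = kL * m) (hkL2 : 2 ≤ kL)
    (hMDS : Nat.card C = Fintype.card L ^ kL) :
    (∀ i j : Fin n, i ≠ j → columnSpace b c i ⊓ columnSpace b c j = ⊥) ∧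
    (∀ i : Fin n, Module.finrank K ↥(columnSpace b c i) = m) := by
  classical
  obtain ⟨u0, hu0C, hu0ne, hu0d⟩ := hd_eq
  have hd1 : 1 ≤ d := by
    rw [← hu0d]; exact hammingNorm_pos_iff.mpr hu0ne
  have hdn : d ≤ n := by
    rw [← hu0d]
    simpa using (hammingNorm_le_card_fintype (x := u0))
  have hn2 : 2 ≤ n := by omega
  -- Step 1: pair evaluation is surjective
  have surj : ∀ i j : Fin n, i ≠ j → ∀ x y : L, ∃ u ∈ C, u i = x ∧ u j = y := by
    intro i j hij x y
    obtain ⟨S, hsub, hcard⟩ := Finset.exists_superset_card_eq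
      (s := ({i, j} : Finset (Fin n))) (n := kL)
      (by rw [Finset.card_pair hij]; exact hkL2)
      (by simp; omega)
    set π : ↥C → (↥S → L) := fun u s => (u : Fin n → L) s with hπ
    have hinj : Function.Injective π := by
      intro u v huv
      by_contra hne
      have hwne : (u : Fin n → L) - v ≠ 0 := by
        intro h0
        exact hne (Subtype.ext (sub_eq_zero.mp h0))
      have hle : d ≤ hammingNorm ((u : Fin n → L) - (v : Fin n → L)) :=
        hd_le _ (C.sub_mem u.2 v.2) hwne
      have hsupp : ∀ s ∈ S, ((u : Fin n → L) - (v : Fin n → L)) s = 0 := by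
        intro s hs
        have := congrFun huv ⟨s, hs⟩
        simpa [hπ, sub_eq_zero] using this
      have hub : hammingNorm ((u : Fin n → L) - (v : Fin n → L)) ≤ n - kL := by
        have hsubc : ({t | ((u : Fin n → L) - (v : Fin n → L)) t ≠ 0} : Finset (Fin n)) ⊆ Sᶜ := by
          intro t ht
          simp only [Finset.mem_filter, Finset.mem_univ, true_and] at ht
          rw [Finset.mem_compl]
          intro hts
          exact ht (hsupp t hts)
        calc hammingNorm ((u : Fin n → L) - (v : Fin n → L)) ≤ Sᶜ.card :=
              Finset.card_le_card hsubc
          _ = n - kL := by rw [Finset.card_compl, hcard]; simp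
      omega
    have hbij : Function.Bijective π := by
      rw [Nat.bijective_iff_injective_and_card]
      refine ⟨hinj, ?_⟩
      rw [hMDS]
      simp [Nat.card_eq_fintype_card, Fintype.card_fun, hcard]
    have hiS : i ∈ S := hsub (by simp)
    have hjS : j ∈ S := hsub (by simp)
    set w : ↥S → L := fun s => if (s : Fin n) = i then x else if (s : Fin n) = j then y else 0
      with hw
    obtain ⟨u, hu⟩ := hbij.2 w
    refine ⟨u, u.2, ?_, ?_⟩
    · have := congrFun hu ⟨i, hiS⟩
      simpa [hπ, hw] using this
    · have := congrFun hu ⟨j, hjS⟩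
      simpa [hπ, hw, Ne.symm hij] using this
  -- Step 2: key vanishing lemma
  have keyA : ∀ i j : Fin n, i ≠ j → ∀ F G : L →ₗ[K] K,
      (∀ r, F (c r i) = G (c r j)) → F = 0 := by
    intro i j hij F G hFG
    have hzero : ∀ u ∈ C, F (u i) - G (u j) = 0 := by
      set Φ : (Fin n → L) →ₗ[K] K :=
        F ∘ₗ (LinearMap.proj (R := K) i) - G ∘ₗ (LinearMap.proj (R := K) j) with hΦ
      have hCker : C ≤ LinearMap.ker Φ := by
        rw [← hspan, Submodule.span_le]
        rintro _ ⟨r, rfl⟩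
        simp [hΦ, hFG r]
      intro u hu
      have := hCker hu
      simpa [hΦ] using this
    ext l
    obtain ⟨u, huC, hui, huj⟩ := surj i j hij l 0
    have := hzero u huC
    rw [hui, huj] at this
    simpa using this
  -- the generating family of the column space
  set g : Fin n → Fin m → (Fin k → K) := fun i t r => b.repr (c r i) t with hg
  have hcol : ∀ i, columnSpace b c i = Submodule.span K (Set.range (g i)) := by
    intro i; rfl
  -- from coefficients to functionals
  have hFval : ∀ (a : Fin m → K) (l : L),
      (∑ t, a t • Module.Basis.coord b t) l = ∑ t, a t * b.repr l t := by
    intro a l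
    simp [Module.Basis.coord]
  have hFbasis : ∀ (a : Fin m → K) (t' : Fin m),
      (∑ t, a t • Module.Basis.coord b t) (b t') = a t' := by
    intro a t'
    rw [hFval]
    simp [Finsupp.single_apply]
  constructor
  · -- trivial intersection
    intro i j hij
    rw [eq_bot_iff]
    intro v hv
    rw [Submodule.mem_inf, hcol i, hcol j] at hv
    obtain ⟨hvi, hvj⟩ := hv
    rw [Finsupp.mem_span_range_iff_exists_finsupp] at hvi hvj
    obtain ⟨a, ha⟩ := hvi
    obtain ⟨a', ha'⟩ := hvj
    set F : L →ₗ[K] K := ∑ t, a t • Module.Basis.coord b t with hF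
    set G : L →ₗ[K] K := ∑ t, a' t • Module.Basis.coord b t with hG
    have hFG : ∀ r, F (c r i) = G (c r j) := by
      intro r
      have h1 : F (c r i) = v r := by
        rw [hF, hFval, ← ha]
        rw [Finsupp.sum_fintype _ _ (by simp)]
        simp [hg]
      have h2 : G (c r j) = v r := by
        rw [hG, hFval, ← ha']
        rw [Finsupp.sum_fintype _ _ (by simp)]
        simp [hg]
      rw [h1, h2]
    have hF0 : F = 0 := keyA i j hij F G hFG
    have hv0 : v = 0 := by
      funext r
      have h1 : F (c r i) = v r := by
        rw [hF, hFval, ← ha]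
        rw [Finsupp.sum_fintype _ _ (by simp)]
        simp [hg]
      rw [← h1, hF0]
      simp
    simp [hv0]
  · -- dimension
    intro i
    have : Nontrivial (Fin n) := by
      rcases n with _ | _ | n
      · omega
      · omega
      · infer_instance
    obtain ⟨j, hj⟩ := exists_ne i
    have hli' : LinearIndependent K (g i) := by
      rw [Fintype.linearIndependent_iff]
      intro a ha
      set F : L →ₗ[K] K := ∑ t, a t • Module.Basis.coord b t with hF
      have hFG : ∀ r, F (c r i) = (0 : L →ₗ[K] K) (c r j) := by
        intro r
        have := congrFun ha r
        simp only [Finset.sum_apply, Pi.smul_apply, smul_eq_mul, Pi.zero_apply] at this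
        rw [hF, hFval]
        simpa [hg] using this
      have hF0 : F = 0 := keyA i j (Ne.symm hj) F 0 hFG
      intro t
      have := hFbasis a t
      rw [← hF, hF0] at this
      simpa using this.symm
    rw [hcol i, finrank_span_eq_card hli']
    simp
end

section
/- Let V be a vector space of dimension m ≥ 2 over the finite field K with |K| = q. Any partition of V into proper subspaces (a family of proper subspaces such that every nonzero vector lies in exactly one member) has at least q^⌈m/2⌉ + 1 members. -/
open Module Finset

/-- Any partition of `K^m` (`m ≥ 2`, `|K| = q`) into proper nonzero subspaces —
a collection of proper subspaces such that every nonzero vector lies in exactly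
one member — has at least `q^⌈m/2⌉ + 1` members. -/
theorem stmt_11 {K : Type*} [Field K] [Fintype K] {m : ℕ} (hm : 2 ≤ m)
    (S : Finset (Submodule K (Fin m → K)))
    (hproper : ∀ W ∈ S, W ≠ ⊤) (hnz : ∀ W ∈ S, W ≠ ⊥)
    (hpart : ∀ v : Fin m → K, v ≠ 0 → ∃! W : Submodule K (Fin m → K), W ∈ S ∧ v ∈ W) :
    Fintype.card K ^ ((m + 1) / 2) + 1 ≤ S.card := by
  classical
  set V := Fin m → K
  set q := Fintype.card K with hq
  have hq2 : 2 ≤ q := Fintype.one_lt_card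
  -- members intersect trivially
  have hdisj : ∀ W₁ ∈ S, ∀ W₂ ∈ S, W₁ ≠ W₂ → ∀ v : V, v ∈ W₁ → v ∈ W₂ → v = 0 := by
    intro W₁ h₁ W₂ h₂ hne v hv₁ hv₂
    by_contra hv
    obtain ⟨W, _, hu⟩ := hpart v hv
    exact hne ((hu W₁ ⟨h₁, hv₁⟩).trans (hu W₂ ⟨h₂, hv₂⟩).symm)
  -- S is nonempty
  have hSne : S.Nonempty := by
    have h1 : (fun _ => (1:K)) ≠ (0:V) := fun h => one_ne_zero (congrFun h ⟨0, by omega⟩)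
    obtain ⟨W, ⟨hW, _⟩, _⟩ := hpart _ h1
    exact ⟨W, hW⟩
  set d := S.sup (fun W => finrank K W) with hd
  obtain ⟨W₀, hW₀S, hW₀d⟩ := Finset.exists_mem_eq_sup S hSne (fun W => finrank K W)
  have hcardV : Fintype.card V = q ^ m := by
    rw [Fintype.card_fun, Fintype.card_fin]
  have hcardW : ∀ W : Submodule K V, Fintype.card W = q ^ finrank K W := by
    intro W
    exact card_eq_pow_finrank
  by_cases hcase : d ≤ m / 2
  · -- small max dimension: counting nonzero vectors
    set A : Submodule K V → Finset V :=
      fun W => Finset.univ.filter (fun v => v ∈ W ∧ v ≠ 0) with hA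
    have hAcard : ∀ W : Submodule K V, (A W).card = q ^ finrank K W - 1 := by
      intro W
      have h0 : A W = (Finset.univ.filter (fun v => v ∈ W)).erase 0 := by
        ext v; simp [hA, and_comm]
      rw [h0, Finset.card_erase_of_mem (by simp [W.zero_mem]),
        ← Fintype.card_subtype, ← hcardW]
    have hunion : Finset.univ.filter (fun v : V => v ≠ 0) = S.biUnion A := by
      ext v
      simp only [Finset.mem_filter, Finset.mem_biUnion, Finset.mem_univ, true_and, hA]
      constructor
      · intro hv
        obtain ⟨W, ⟨hWS, hvW⟩, _⟩ := hpart v hv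
        exact ⟨W, hWS, hvW, hv⟩
      · rintro ⟨W, _, _, hv⟩; exact hv
    have hdisjA : ∀ W₁ ∈ S, ∀ W₂ ∈ S, W₁ ≠ W₂ → Disjoint (A W₁) (A W₂) := by
      intro W₁ h₁ W₂ h₂ hne
      rw [Finset.disjoint_left]
      intro v hv₁ hv₂
      simp only [hA, Finset.mem_filter] at hv₁ hv₂
      exact hv₁.2.2 (hdisj W₁ h₁ W₂ h₂ hne v hv₁.2.1 hv₂.2.1)
    have hcount : q ^ m - 1 = ∑ W ∈ S, ((A W).card) := by
      rw [← Finset.card_biUnion hdisjA, ← hunion]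
      have : Finset.univ.filter (fun v : V => v ≠ 0) = Finset.univ.erase 0 := by
        ext v; simp
      rw [this, Finset.card_erase_of_mem (Finset.mem_univ 0), Finset.card_univ, hcardV]
    have hbound : q ^ m - 1 ≤ S.card * (q ^ d - 1) := by
      rw [hcount]
      have := Finset.sum_le_card_nsmul S (fun W => (A W).card) (q ^ d - 1) ?_
      · simpa [mul_comm] using this
      · intro W hW
        rw [hAcard]
        have : finrank K ↥W ≤ d := Finset.le_sup (f := fun U : Submodule K V => finrank K U) hW
        exact Nat.sub_le_sub_right (Nat.pow_le_pow_right (by omega) this) 1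
    by_contra hcon
    push_neg at hcon
    have hScard : S.card ≤ q ^ ((m + 1) / 2) := by omega
    have h1 : q ^ m - 1 ≤ q ^ ((m + 1) / 2) * (q ^ d - 1) :=
      hbound.trans (Nat.mul_le_mul_right _ hScard)
    have h2 : q ^ ((m + 1) / 2) * q ^ d ≤ q ^ m := by
      rw [← pow_add]
      exact Nat.pow_le_pow_right (by omega) (by omega)
    have h3 : q ^ ((m + 1) / 2) * (q ^ d - 1)
        = q ^ ((m + 1) / 2) * q ^ d - q ^ ((m + 1) / 2) := by
      rw [Nat.mul_sub, mul_one]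
    have h4 : 2 ≤ q ^ ((m + 1) / 2) := by
      calc 2 = 2 ^ 1 := rfl
        _ ≤ q ^ ((m + 1) / 2) := Nat.pow_le_pow_left hq2 1 |>.trans
            (Nat.pow_le_pow_right (by omega) (by omega))
    have h5 : 4 ≤ q ^ m := by
      calc 4 = 2 ^ 2 := rfl
        _ ≤ q ^ 2 := Nat.pow_le_pow_left hq2 2
        _ ≤ q ^ m := Nat.pow_le_pow_right (by omega) hm
    omega
  · -- large max dimension: coset injection
    push_neg at hcase
    -- pick v ∉ W₀
    have : ∃ v : V, v ∉ W₀ := by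
      by_contra h
      push_neg at h
      exact hproper W₀ hW₀S (Submodule.eq_top_iff'.mpr h)
    obtain ⟨v, hv⟩ := this
    have hne0 : ∀ w : W₀, v + (w : V) ≠ 0 := by
      intro w h
      apply hv
      have : v = -(w : V) := by linear_combination (norm := module) h
      rw [this]
      exact W₀.neg_mem w.2
    have key : ∀ w : W₀, ∃! W : Submodule K V, W ∈ S ∧ v + (w : V) ∈ W :=
      fun w => hpart _ (hne0 w)
    set f : W₀ → Submodule K V := fun w => (key w).choose with hf
    have hfS : ∀ w : W₀, f w ∈ S ∧ v + (w : V) ∈ f w := fun w => (key w).choose_spec.1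
    have hfne : ∀ w : W₀, f w ≠ W₀ := by
      intro w h
      have h2 := (hfS w).2
      rw [h] at h2
      exact hv ((W₀.add_mem_iff_left w.2).mp h2)
    have hinj : Function.Injective f := by
      intro w₁ w₂ h
      have h1 : (v + (w₁ : V)) - (v + (w₂ : V)) ∈ f w₁ :=
        (f w₁).sub_mem (hfS w₁).2 (h ▸ (hfS w₂).2)
      have h2 : (v + (w₁ : V)) - (v + (w₂ : V)) ∈ W₀ := by
        have : (v + (w₁ : V)) - (v + (w₂ : V)) = (w₁ : V) - (w₂ : V) := by ring
        rw [this]; exact W₀.sub_mem w₁.2 w₂.2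
      by_cases hfw : f w₁ = W₀
      · exact absurd hfw (hfne w₁)
      · have := hdisj (f w₁) (hfS w₁).1 W₀ hW₀S hfw _ h1 h2
        have hw : (w₁ : V) = (w₂ : V) := by
          have h' : (w₁ : V) - (w₂ : V) = 0 := by
            rw [← this]; ring
          linear_combination (norm := module) h'
        exact Subtype.ext hw
    have hcard : Fintype.card W₀ ≤ (S.erase W₀).card := by
      apply Finset.card_le_card_of_injOn f
      · intro w _
        exact Finset.mem_erase.mpr ⟨hfne ⟨w, by simp⟩, (hfS _).1⟩
      · exact fun a _ b _ h => hinj h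
    rw [hcardW W₀, ← hW₀d, ← hd] at hcard
    have herase : (S.erase W₀).card = S.card - 1 := Finset.card_erase_of_mem hW₀S
    have hdge : q ^ ((m + 1) / 2) ≤ q ^ d := Nat.pow_le_pow_right (by omega) (by omega)
    have hS1 : 1 ≤ S.card := Finset.card_pos.mpr ⟨W₀, hW₀S⟩
    set_option maxHeartbeats 1000000 in
    omega
end

section
/- Let K ⊆ L be finite fields with [L:K] = m, and let C ⊆ Lⁿ be an L-linear code. Consider C as a K-linear code with basis given by {bⱼ·cᵢ} where c₁,…,c_{k_L} is an L-basis of C and b₁,…,b_m a K-basis of L, and let V₁,…,Vₙ ⊆ K^{m·k_L} be the corresponding column spaces. Then each Vᵢ has dim_K Vᵢ ∈ {0, m}. -/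
/-- For an `L`-linear code `C ⊆ Lⁿ`, viewed as a `K`-linear code with `K`-basis
`{bⱼ • cᵢ}` (`cᵢ` an `L`-basis of `C`, `bⱼ` a `K`-basis of `L`), every column
space has `K`-dimension `0` or `m`. -/
theorem stmt_13 {K L : Type*} [Field K] [Field L] [Algebra K L]
    [Fintype K] [Fintype L] {m n kL : ℕ} (b : Module.Basis (Fin m) K L)
    (C : Submodule L (Fin n → L)) (cL : Fin kL → (Fin n → L))
    (hli : LinearIndependent L cL) (hspan : Submodule.span L (Set.range cL) = C) :
    ∀ i : Fin n,
      Module.finrank K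
          ↥(columnSpace b (fun p : Fin m × Fin kL => fun r => b p.1 * cL p.2 r) i) = 0 ∨
      Module.finrank K
          ↥(columnSpace b (fun p : Fin m × Fin kL => fun r => b p.1 * cL p.2 r) i) = m := by
  intro i
  set v : Fin m → (Fin m × Fin kL) → K :=
    fun j => fun r : Fin m × Fin kL =>
      b.repr ((fun p : Fin m × Fin kL => fun r => b p.1 * cL p.2 r) r i) j with hv
  by_cases hz : ∀ r : Fin kL, cL r i = 0
  · left
    have hv0 : ∀ j, v j = 0 := by
      intro j
      funext p
      simp [hv, hz p.2]
    have : columnSpace b (fun p : Fin m × Fin kL => fun r => b p.1 * cL p.2 r) i = ⊥ := by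
      rw [columnSpace, Submodule.span_eq_bot]
      rintro x ⟨j, rfl⟩
      exact hv0 j
    rw [this]
    simp
  · right
    push_neg at hz
    obtain ⟨r0, hr0⟩ := hz
    set c : L := cL r0 i with hc
    have hind : LinearIndependent K v := by
      rw [Fintype.linearIndependent_iff]
      intro g hg
      -- define the functional f
      set f : L →ₗ[K] K := ∑ j : Fin m, g j • b.coord j with hf
      have hfval : ∀ x : L, f x = ∑ j : Fin m, g j * b.repr x j := by
        intro x
        simp [hf, LinearMap.sum_apply, Module.Basis.coord_apply]
      have hvan : ∀ p1 : Fin m, f (b p1 * c) = 0 := by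
        intro p1
        have := congrFun hg (p1, r0)
        simpa [hfval, v, Finset.sum_apply] using this
      have key : ∀ x ∈ Submodule.span K (Set.range b), f (x * c) = 0 := by
        intro x hmem
        induction hmem using Submodule.span_induction with
          | mem x hx =>
            obtain ⟨p1, rfl⟩ := hx
            exact hvan p1
          | zero => simp
          | add x y _ _ hx hy =>
            rw [add_mul, map_add, hx, hy, add_zero]
          | smul a x _ hx =>
            rw [smul_mul_assoc, map_smul, hx, smul_zero]
      have hfzero : ∀ y : L, f y = 0 := by
        intro y
        have h1 := key (y * c⁻¹) (by rw [b.span_eq]; trivial)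
        rwa [mul_assoc, inv_mul_cancel₀ hr0, mul_one] at h1
      intro j
      have := hfzero (b j)
      rw [hfval] at this
      simpa [Finsupp.single_apply, Finset.sum_ite_eq'] using this
    have hcard : Module.finrank K (Submodule.span K (Set.range v)) = m := by
      rw [finrank_span_eq_card hind]
      simp
    exact hcard
end

section
/- Let K ⊆ L be finite fields and C ⊆ Lⁿ an L-linear code with column spaces V₁,…,Vₙ ⊆ K^k defined from a K-basis of C of the form {bⱼcᵢ}. Then for any i ≠ j, either Vᵢ = Vⱼ or Vᵢ ∩ Vⱼ = {0}; moreover Vᵢ = Vⱼ (both nonzero) holds exactly when the i-th and j-th columns of an L-generator matrix of C are nonzero scalar multiples of one another. -/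
section Aux

variable {K L : Type*} [Field K] [Field L] [Algebra K L] {m n kL : ℕ}

/-- The linear map whose range is the column space. -/
noncomputable def PhiMap (b : Module.Basis (Fin m) K L) (u : Fin kL → L) :
    Module.Dual K L →ₗ[K] (Fin m × Fin kL → K) where
  toFun f := fun p => f (b p.1 * u p.2)
  map_add' f g := by ext p; simp
  map_smul' a f := by ext p; simp

lemma columnSpace_eq_range (b : Module.Basis (Fin m) K L) (cL : Fin kL → (Fin n → L)) (i : Fin n) :
    columnSpace b (fun p : Fin m × Fin kL => fun r => b p.1 * cL p.2 r) i
      = LinearMap.range (PhiMap b (fun r => cL r i)) := by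
  unfold columnSpace
  have hset : (Set.range fun j : Fin m => fun p : Fin m × Fin kL => b.repr (b p.1 * cL p.2 i) j)
      = PhiMap b (fun r => cL r i) '' (Set.range b.coord) := by
    ext w
    constructor
    · rintro ⟨j, rfl⟩
      exact ⟨b.coord j, ⟨j, rfl⟩, by ext p; simp [PhiMap]⟩
    · rintro ⟨f, ⟨j, rfl⟩, rfl⟩
      exact ⟨j, by ext p; simp [PhiMap]⟩
  rw [hset, ← Submodule.map_span, ← Module.Basis.coe_dualBasis, Module.Basis.span_eq, Submodule.map_top]

lemma range_phi_ne_bot (b : Module.Basis (Fin m) K L) {u : Fin kL → L} (r : Fin kL) (hr : u r ≠ 0) :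
    LinearMap.range (PhiMap b u) ≠ ⊥ := by
  have : Nontrivial L := inferInstance
  obtain ⟨j₂⟩ := b.index_nonempty
  have hx : b j₂ * u r ≠ 0 := mul_ne_zero (b.ne_zero j₂) hr
  have hrepr : b.repr (b j₂ * u r) ≠ 0 := by
    intro h
    exact hx (by simpa using congrArg b.repr.symm h)
  obtain ⟨j, hj⟩ := Finsupp.ne_iff.mp hrepr
  intro hbot
  have : PhiMap b u (b.coord j) = 0 := by
    have := LinearMap.mem_range_self (PhiMap b u) (b.coord j)
    rw [hbot] at this
    simpa using this
  have := congrFun this (j₂, r)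
  simp [PhiMap] at this
  exact hj this

lemma range_phi_zero (b : Module.Basis (Fin m) K L) {u : Fin kL → L} (hu : ∀ r, u r = 0) :
    LinearMap.range (PhiMap b u) = ⊥ := by
  have : PhiMap b u = 0 := by
    ext f p
    simp [PhiMap, hu]
  rw [this, LinearMap.range_zero]

lemma range_phi_smul (b : Module.Basis (Fin m) K L) (u : Fin kL → L) {lam : L} (hlam : lam ≠ 0) :
    LinearMap.range (PhiMap b (fun r => lam * u r)) = LinearMap.range (PhiMap b u) := by
  have key : ∀ (f : Module.Dual K L),
      PhiMap b (fun r => lam * u r) f = PhiMap b u (f ∘ₗ LinearMap.mulLeft K lam) := by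
    intro f
    ext p
    simp [PhiMap, LinearMap.mulLeft_apply]
    ring_nf
  apply le_antisymm
  · rintro w ⟨f, rfl⟩
    exact ⟨f ∘ₗ LinearMap.mulLeft K lam, (key f).symm⟩
  · rintro w ⟨g, rfl⟩
    refine ⟨g ∘ₗ LinearMap.mulLeft K lam⁻¹, ?_⟩
    rw [key]
    ext p
    simp [PhiMap, LinearMap.mulLeft_apply, inv_mul_cancel_left₀ hlam]

/-- Key disjointness lemma. -/
lemma range_phi_disjoint (b : Module.Basis (Fin m) K L) {u v : Fin kL → L} (r₀ : Fin kL)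
    (h₀ : u r₀ ≠ 0) (r₁ : Fin kL) (h₁ : v r₁ ≠ (v r₀ * (u r₀)⁻¹) * u r₁) :
    LinearMap.range (PhiMap b u) ⊓ LinearMap.range (PhiMap b v) = ⊥ := by
  set lam : L := v r₀ * (u r₀)⁻¹ with hlam
  rw [eq_bot_iff]
  rintro w ⟨⟨f, rfl⟩, ⟨g, hg⟩⟩
  have hp : ∀ p : Fin m × Fin kL, f (b p.1 * u p.2) = g (b p.1 * v p.2) := by
    intro p
    have := congrFun hg p
    simp [PhiMap] at this ⊢
    exact this.symm
  -- Step 1: for all x, r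
  have step1 : ∀ (x : L) (r : Fin kL), f (x * u r) = g (x * v r) := by
    intro x r
    have : f ∘ₗ LinearMap.mulRight K (u r) = g ∘ₗ LinearMap.mulRight K (v r) := by
      apply b.ext
      intro j₂
      simpa [LinearMap.mulRight_apply] using hp (j₂, r)
    simpa [LinearMap.mulRight_apply] using congrArg (fun h => h x) (congrArg DFunLike.coe this)
  -- Step 2: f y = g (lam * y)
  have step2 : ∀ y : L, f y = g (lam * y) := by
    intro y
    have := step1 (y * (u r₀)⁻¹) r₀
    rw [mul_assoc, inv_mul_cancel₀ h₀, mul_one] at this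
    rw [this]
    congr 1
    field_simp [hlam]
    rw [hlam, mul_comm (v r₀), ← mul_assoc, mul_assoc y, mul_inv_cancel₀ h₀, mul_one]
  -- Step 3: g = 0
  have step3 : ∀ y : L, g y = 0 := by
    intro y
    set d : L := v r₁ - lam * u r₁ with hd
    have hdne : d ≠ 0 := sub_ne_zero.mpr h₁
    have e1 : f ((y * d⁻¹) * u r₁) = g ((y * d⁻¹) * v r₁) := step1 _ r₁
    have e2 : f ((y * d⁻¹) * u r₁) = g (lam * ((y * d⁻¹) * u r₁)) := step2 _
    have e3 : g ((y * d⁻¹) * v r₁) - g (lam * ((y * d⁻¹) * u r₁)) = 0 := by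
      rw [← e1, ← e2, sub_self]
    have e4 : g ((y * d⁻¹) * v r₁ - lam * ((y * d⁻¹) * u r₁)) = 0 := by
      rw [map_sub]; exact e3
    have harg : (y * d⁻¹) * v r₁ - lam * ((y * d⁻¹) * u r₁) = y := by
      field_simp [hd]
      ring
    rwa [harg] at e4
  have hz : PhiMap b u f = 0 := by
    rw [← hg]
    ext p
    simp [PhiMap, step3]
  simp [hz]

end Aux

/-- For an `L`-linear code with column spaces defined via the `K`-basis `{bⱼ • cᵢ}`:
any two column spaces either coincide or intersect trivially; they coincide and
are nonzero exactly when the corresponding columns of the `L`-generator matrix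
are nonzero scalar multiples of one another. -/
theorem stmt_14 {K L : Type*} [Field K] [Field L] [Algebra K L]
    [Fintype K] [Fintype L] {m n kL : ℕ} (b : Module.Basis (Fin m) K L)
    (C : Submodule L (Fin n → L)) (cL : Fin kL → (Fin n → L))
    (hli : LinearIndependent L cL) (hspan : Submodule.span L (Set.range cL) = C) :
    ∀ i j : Fin n, i ≠ j →
      (columnSpace b (fun p : Fin m × Fin kL => fun r => b p.1 * cL p.2 r) i =
         columnSpace b (fun p : Fin m × Fin kL => fun r => b p.1 * cL p.2 r) j ∨
       columnSpace b (fun p : Fin m × Fin kL => fun r => b p.1 * cL p.2 r) i ⊓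
         columnSpace b (fun p : Fin m × Fin kL => fun r => b p.1 * cL p.2 r) j = ⊥) ∧
      ((columnSpace b (fun p : Fin m × Fin kL => fun r => b p.1 * cL p.2 r) i =
          columnSpace b (fun p : Fin m × Fin kL => fun r => b p.1 * cL p.2 r) j ∧
        columnSpace b (fun p : Fin m × Fin kL => fun r => b p.1 * cL p.2 r) i ≠ ⊥) ↔
       ((∃ r : Fin kL, cL r i ≠ 0) ∧
        ∃ lam : L, lam ≠ 0 ∧ ∀ r : Fin kL, cL r j = lam * cL r i)) := by
  intro i j _
  rw [columnSpace_eq_range b cL i, columnSpace_eq_range b cL j]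
  set u : Fin kL → L := fun r => cL r i with hu
  set v : Fin kL → L := fun r => cL r j with hv
  constructor
  · -- dichotomy
    by_cases hu0 : ∀ r, u r = 0
    · right
      rw [range_phi_zero b hu0, bot_inf_eq]
    · push_neg at hu0
      obtain ⟨r₀, hr₀⟩ := hu0
      set lam : L := v r₀ * (u r₀)⁻¹ with hlam
      by_cases hprop : ∀ r, v r = lam * u r
      · by_cases hlz : lam = 0
        · right
          have : ∀ r, v r = 0 := fun r => by rw [hprop r, hlz, zero_mul]
          rw [range_phi_zero b this, inf_bot_eq]
        · left
          have : v = fun r => lam * u r := funext hprop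
          rw [this, range_phi_smul b u hlz]
      · push_neg at hprop
        obtain ⟨r₁, hr₁⟩ := hprop
        exact Or.inr (range_phi_disjoint b r₀ hr₀ r₁ hr₁)
  · constructor
    · rintro ⟨heq, hne⟩
      by_cases hu0 : ∀ r, u r = 0
      · exact absurd (range_phi_zero b hu0) hne
      · push_neg at hu0
        obtain ⟨r₀, hr₀⟩ := hu0
        refine ⟨⟨r₀, hr₀⟩, ?_⟩
        set lam : L := v r₀ * (u r₀)⁻¹ with hlam
        by_cases hprop : ∀ r, v r = lam * u r
        · refine ⟨lam, ?_, hprop⟩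
          intro hlz
          have hv0 : ∀ r, v r = 0 := fun r => by rw [hprop r, hlz, zero_mul]
          rw [heq, range_phi_zero b hv0] at hne
          exact hne rfl
        · push_neg at hprop
          obtain ⟨r₁, hr₁⟩ := hprop
          have := range_phi_disjoint b r₀ hr₀ r₁ hr₁
          rw [heq, inf_idem] at this
          rw [heq] at hne
          exact absurd this hne
    · rintro ⟨⟨r₀, hr₀⟩, lam, hlz, hprop⟩
      have hveq : v = fun r => lam * u r := funext hprop
      constructor
      · rw [hveq, range_phi_smul b u hlz]
      · exact range_phi_ne_bot b r₀ hr₀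
end

section
/- If L is a finite field, every surjective L-linear Hamming weight-preserving map f : C → C' between L-linear codes C, C' ⊆ Lⁿ extends to a monomial map of Lⁿ, i.e., a map permuting coordinates and multiplying coordinates by nonzero scalars of L (MacWilliams Extension Theorem). -/
open Finset LinearMap

section aux
variable {L : Type*} [Field L] {V : Type*} [AddCommGroup V] [Module L V]

/-- For a nonzero functional on `V`, `|ker ℓ| * |L| = |V|`. -/
lemma MW.card_ker_mul_card (ℓ : V →ₗ[L] L) (hℓ : ℓ ≠ 0) :
    Nat.card (ker ℓ) * Nat.card L = Nat.card V := by
  obtain ⟨y, hy⟩ : ∃ y, ℓ y ≠ 0 := by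
    by_contra hcon; push_neg at hcon
    exact hℓ (LinearMap.ext fun x => by simp [hcon])
  set x0 := (ℓ y)⁻¹ • y with hx0
  have hℓx0 : ℓ x0 = 1 := by simp [hx0, inv_mul_cancel₀ hy]
  have e : (ker ℓ × L) ≃ V :=
    { toFun := fun p => p.1.1 + p.2 • x0
      invFun := fun x => (⟨x - ℓ x • x0, by simp [hℓx0]⟩, ℓ x)
      left_inv := by
        rintro ⟨⟨k, hk⟩, c⟩
        have hk' : ℓ k = 0 := hk
        ext
        · simp [hk', hℓx0]
        · simp [hk', hℓx0]
      right_inv := fun x => by simp [hℓx0] }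
  rw [← Nat.card_congr e, Nat.card_prod]

lemma MW.ker_eq_ker_of_le [Finite L] [Finite V] {ℓ1 ℓ2 : V →ₗ[L] L} (h1 : ℓ1 ≠ 0) (h2 : ℓ2 ≠ 0)
    (hle : ker ℓ1 ≤ ker ℓ2) : ker ℓ2 = ker ℓ1 := by
  have e1 := MW.card_ker_mul_card ℓ1 h1
  have e2 := MW.card_ker_mul_card ℓ2 h2
  have hL : 0 < Nat.card L := Nat.card_pos
  have hcard : Nat.card (ker ℓ2) = Nat.card (ker ℓ1) :=
    Nat.eq_of_mul_eq_mul_right hL (e2.trans e1.symm)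
  have hsub : (ker ℓ1 : Set V) ⊆ (ker ℓ2 : Set V) := hle
  have hfin : (ker ℓ2 : Set V).Finite := Set.toFinite _
  have hn1 : Nat.card (ker ℓ1) = (ker ℓ1 : Set V).ncard := Nat.card_coe_set_eq _
  have hn2 : Nat.card (ker ℓ2) = (ker ℓ2 : Set V).ncard := Nat.card_coe_set_eq _
  have := Set.eq_of_subset_of_ncard_le hsub (by rw [← hn1, ← hn2, hcard]) hfin
  exact SetLike.coe_injective this.symm

lemma MW.exists_unit_of_ker_eq {ℓ1 ℓ2 : V →ₗ[L] L} (h1 : ℓ1 ≠ 0)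
    (hk : ker ℓ1 = ker ℓ2) : ∃ c : Lˣ, ∀ x, ℓ2 x = c * ℓ1 x := by
  obtain ⟨y, hy⟩ : ∃ y, ℓ1 y ≠ 0 := by
    by_contra hcon; push_neg at hcon
    exact h1 (LinearMap.ext fun x => by simp [hcon])
  have hy2 : ℓ2 y ≠ 0 := by
    intro h0
    have : y ∈ ker ℓ2 := mem_ker.mpr h0
    rw [← hk] at this
    exact hy this
  refine ⟨Units.mk0 (ℓ2 y / ℓ1 y) (div_ne_zero hy2 hy), fun x => ?_⟩
  have hmem : x - (ℓ1 x / ℓ1 y) • y ∈ ker ℓ1 := by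
    simp [mem_ker, div_mul_cancel₀, hy]
  rw [hk, mem_ker] at hmem
  simp only [map_sub, map_smul, smul_eq_mul, sub_eq_zero] at hmem
  rw [hmem]
  rw [Units.val_mk0]
  ring

/-- Counting zeros of a functional on a submodule on which it is nonzero. -/
lemma MW.count_inter [Finite V] (s : Submodule L V) (ℓ : V →ₗ[L] L)
    (h : ¬ s ≤ ker ℓ) :
    Nat.card {x : V // x ∈ s ∧ ℓ x = 0} * Nat.card L = Nat.card s := by
  obtain ⟨y, hys, hy⟩ : ∃ y ∈ s, y ∉ ker ℓ := SetLike.not_le_iff_exists.mp h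
  have hne : ℓ ∘ₗ s.subtype ≠ 0 := by
    intro h0
    apply hy
    have : (ℓ ∘ₗ s.subtype) ⟨y, hys⟩ = 0 := by rw [h0]; rfl
    exact this
  have e : {x : V // x ∈ s ∧ ℓ x = 0} ≃ ker (ℓ ∘ₗ s.subtype) :=
    { toFun := fun x => ⟨⟨x.1, x.2.1⟩, x.2.2⟩
      invFun := fun y => ⟨y.1.1, y.1.2, y.2⟩
      left_inv := fun x => rfl
      right_inv := fun y => rfl }
  rw [Nat.card_congr e]
  exact MW.card_ker_mul_card _ hne
/-- main counting lemma -/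
lemma MW.key_count [Fintype L] [Finite V] {n : ℕ} (g h : Fin n → (V →ₗ[L] L))
    (H : ∀ x : V, Nat.card {i // g i x = 0} = Nat.card {i // h i x = 0})
    (s : Submodule L V) :
    Nat.card {i // s ≤ ker (g i)} = Nat.card {i // s ≤ ker (h i)} := by
  classical
  cases nonempty_fintype V
  set q := Fintype.card L with hqdef
  have hq : 2 ≤ q := Fintype.one_lt_card
  set T : Finset V := univ.filter (· ∈ s) with hT
  have hTcard : T.card = Nat.card s := by
    rw [Nat.card_eq_fintype_card, Fintype.card_subtype]
  have hTpos : 0 < T.card := by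
    refine card_pos.mpr ⟨0, ?_⟩
    simp [hT, s.zero_mem]
  -- per functional count
  have key : ∀ ℓ : V →ₗ[L] L,
      q * (T.filter fun x => ℓ x = 0).card
        = T.card + (if s ≤ ker ℓ then (q - 1) * T.card else 0) := by
    intro ℓ
    by_cases hle : s ≤ ker ℓ
    · rw [if_pos hle]
      have hfull : T.filter (fun x => ℓ x = 0) = T := by
        apply filter_eq_self.mpr
        intro x hx
        have hxs : x ∈ s := by simpa [hT] using hx
        exact hle hxs
      rw [hfull]
      have h1 : q - 1 + 1 = q := by omega
      calc q * T.card = (q - 1 + 1) * T.card := by rw [h1]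
        _ = T.card + (q - 1) * T.card := by ring
    · rw [if_neg hle, add_zero]
      have hb := MW.count_inter s ℓ hle
      have hfc : (T.filter fun x => ℓ x = 0).card
          = Nat.card {x : V // x ∈ s ∧ ℓ x = 0} := by
        rw [Nat.card_eq_fintype_card, Fintype.card_subtype, hT, filter_filter]
      rw [← hfc] at hb
      rw [hTcard, ← hb, Nat.card_eq_fintype_card]
      ring
  -- double counting
  have hsum : ∀ G : Fin n → (V →ₗ[L] L),
      ∑ x ∈ T, (univ.filter fun i => G i x = 0).card
        = ∑ i, (T.filter fun x => G i x = 0).card := by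
    intro G
    simp_rw [card_filter]
    rw [Finset.sum_comm]
  have heval : ∀ G : Fin n → (V →ₗ[L] L),
      q * ∑ x ∈ T, (univ.filter fun i => G i x = 0).card
        = n * T.card
          + (univ.filter fun i => s ≤ ker (G i)).card * ((q - 1) * T.card) := by
    intro G
    rw [hsum, Finset.mul_sum]
    simp_rw [key]
    rw [Finset.sum_add_distrib, Finset.sum_const, Finset.sum_ite, Finset.sum_const,
      Finset.sum_const, smul_eq_mul, smul_eq_mul, smul_eq_mul, mul_zero, add_zero,
      card_univ, Fintype.card_fin]
  have hsame : ∑ x ∈ T, (univ.filter fun i => g i x = 0).card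
      = ∑ x ∈ T, (univ.filter fun i => h i x = 0).card := by
    apply Finset.sum_congr rfl
    intro x _
    have := H x
    rwa [Nat.card_eq_fintype_card, Nat.card_eq_fintype_card,
      Fintype.card_subtype, Fintype.card_subtype] at this
  have hPg := heval g
  have hPh := heval h
  rw [hsame, hPh] at hPg
  have hpos : 0 < (q - 1) * T.card := by
    apply Nat.mul_pos (by omega) hTpos
  have : (univ.filter fun i => s ≤ ker (h i)).card
      = (univ.filter fun i => s ≤ ker (g i)).card :=
    Nat.eq_of_mul_eq_mul_right hpos (by omega)
  rw [Nat.card_eq_fintype_card, Nat.card_eq_fintype_card,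
    Fintype.card_subtype, Fintype.card_subtype]
  omega
end aux

/-- MacWilliams Extension Theorem: every `L`-linear Hamming weight-preserving
map `f : C → Lⁿ` on an `L`-linear code `C ⊆ Lⁿ` (surjective onto its image
code `C' = f(C)`) extends to a monomial map of `Lⁿ`, i.e. a coordinate
permutation combined with multiplication of coordinates by nonzero scalars. -/
theorem stmt_16 {L : Type*} [Field L] [Fintype L] [DecidableEq L] {n : ℕ}
    (hn : 0 < n) (C : Submodule L (Fin n → L)) (f : C →ₗ[L] (Fin n → L))
    (hf : ∀ x : C, hammingNorm (f x) = hammingNorm (x : Fin n → L)) :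
    ∃ (π : Equiv.Perm (Fin n)) (lam : Fin n → Lˣ),
      ∀ (x : C) (i : Fin n), f x i = (lam i : L) * (x : Fin n → L) (π i) := by
  classical
  set g : Fin n → (↥C →ₗ[L] L) := fun i => (LinearMap.proj i) ∘ₗ f with hg
  set h : Fin n → (↥C →ₗ[L] L) := fun i => (LinearMap.proj i) ∘ₗ C.subtype with hh
  have happg : ∀ i (x : ↥C), g i x = f x i := fun i x => rfl
  have happh : ∀ i (x : ↥C), h i x = (x : Fin n → L) i := fun i x => rfl
  have H : ∀ x : ↥C, Nat.card {i // g i x = 0} = Nat.card {i // h i x = 0} := by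
    intro x
    have hfx : (univ.filter fun i => ¬ (f x i = 0)).card
        = (univ.filter fun i => ¬ ((x : Fin n → L) i = 0)).card := by
      have := hf x
      unfold hammingNorm at this
      convert this using 2 <;> simp [eq_iff_iff] <;> tauto
    have h2 := Finset.card_filter_add_card_filter_not
      (s := (univ : Finset (Fin n))) (p := fun i => f x i = 0)
    have h3 := Finset.card_filter_add_card_filter_not
      (s := (univ : Finset (Fin n))) (p := fun i => (x : Fin n → L) i = 0)
    rw [Nat.card_eq_fintype_card, Nat.card_eq_fintype_card,
      Fintype.card_subtype, Fintype.card_subtype]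
    have e1 : (univ.filter fun i => g i x = 0) = (univ.filter fun i => f x i = 0) := rfl
    have e2 : (univ.filter fun i => h i x = 0)
        = (univ.filter fun i => (x : Fin n → L) i = 0) := rfl
    rw [e1, e2]
    omega
  have key := MW.key_count g h H
  have hzero : (univ.filter fun i => g i = 0).card = (univ.filter fun i => h i = 0).card := by
    have hk := key ⊤
    rw [Nat.card_eq_fintype_card, Nat.card_eq_fintype_card,
      Fintype.card_subtype, Fintype.card_subtype] at hk
    simpa only [top_le_iff, ker_eq_top] using hk
  have hcount : ∀ s : Submodule L ↥C,
      Fintype.card {i // ker (g i) = s} = Fintype.card {i // ker (h i) = s} := by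
    intro s
    rw [Fintype.card_subtype, Fintype.card_subtype]
    by_cases htop : s = ⊤
    · subst htop
      simpa only [ker_eq_top] using hzero
    · by_cases hex : (∃ i, g i ≠ 0 ∧ ker (g i) = s) ∨ (∃ i, h i ≠ 0 ∧ ker (h i) = s)
      · obtain ⟨ℓ0, hℓ0, hkℓ0⟩ : ∃ ℓ0 : ↥C →ₗ[L] L, ℓ0 ≠ 0 ∧ ker ℓ0 = s := by
          rcases hex with ⟨i, hi, hk⟩ | ⟨i, hi, hk⟩
          exacts [⟨g i, hi, hk⟩, ⟨h i, hi, hk⟩]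
        have hiff : ∀ ℓ : ↥C →ₗ[L] L, s ≤ ker ℓ ↔ (ℓ = 0 ∨ ker ℓ = s) := by
          intro ℓ
          constructor
          · intro hle
            by_cases hℓ : ℓ = 0
            · exact Or.inl hℓ
            · right
              rw [← hkℓ0] at hle ⊢
              exact MW.ker_eq_ker_of_le hℓ0 hℓ hle
          · rintro (rfl | hk)
            · rw [ker_zero]; exact le_top
            · rw [hk]
        have hk := key s
        rw [Nat.card_eq_fintype_card, Nat.card_eq_fintype_card,
          Fintype.card_subtype, Fintype.card_subtype] at hk
        have split : ∀ G : Fin n → (↥C →ₗ[L] L),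
            (univ.filter fun i => s ≤ ker (G i)).card
              = (univ.filter fun i => G i = 0).card
                + (univ.filter fun i => ker (G i) = s).card := by
          intro G
          have hu : (univ.filter fun i => s ≤ ker (G i))
              = (univ.filter fun i => G i = 0 ∨ ker (G i) = s) := by
            apply filter_congr
            intro i _
            exact hiff (G i)
          rw [hu, filter_or]
          apply card_union_of_disjoint
          rw [Finset.disjoint_left]
          intro i hi1 hi2
          rw [mem_filter] at hi1 hi2
          apply htop
          rw [← hi2.2, hi1.2, ker_zero]
        rw [split g, split h] at hk
        omega
      · push_neg at hex
        obtain ⟨h1, h2⟩ := hex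
        have e1 : (univ.filter fun i => ker (g i) = s) = ∅ := by
          rw [filter_eq_empty_iff]
          intro i _ hk
          rcases eq_or_ne (g i) 0 with h0 | h0
          · exact htop (by rw [← hk, h0, ker_zero])
          · exact (h1 i h0) hk
        have e2 : (univ.filter fun i => ker (h i) = s) = ∅ := by
          rw [filter_eq_empty_iff]
          intro i _ hk
          rcases eq_or_ne (h i) 0 with h0 | h0
          · exact htop (by rw [← hk, h0, ker_zero])
          · exact (h2 i h0) hk
        rw [e1, e2]
  let e : ∀ s : Submodule L ↥C, {i // ker (g i) = s} ≃ {i // ker (h i) = s} :=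
    fun s => Fintype.equivOfCardEq (hcount s)
  let π : Equiv.Perm (Fin n) := Equiv.ofFiberEquiv e
  have hπ : ∀ i, ker (h (π i)) = ker (g i) := fun i => Equiv.ofFiberEquiv_map e i
  have hlam : ∀ i, ∃ c : Lˣ, ∀ x : ↥C, g i x = c * h (π i) x := by
    intro i
    by_cases hgi : g i = 0
    · refine ⟨1, fun x => ?_⟩
      have hh0 : h (π i) = 0 := by
        apply ker_eq_top.mp
        rw [hπ i, hgi, ker_zero]
      rw [hgi, hh0]
      simp
    · have hhπ : h (π i) ≠ 0 := by
        intro h0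
        apply hgi
        apply ker_eq_top.mp
        rw [← hπ i, h0, ker_zero]
      exact MW.exists_unit_of_ker_eq hhπ (hπ i)
  choose lam hlam using hlam
  exact ⟨π, lam, fun x i => hlam i x⟩
end

section
/- Let K ⊂ L be finite fields and C ⊆ Lⁿ a K-linear MDS code with column spaces V₁,…,Vₙ ⊆ K^k and k_L ≥ 3. Then for any three distinct indices i, j, l, one has V_l ∩ (V_i + V_j) = {0}. -/
/-- For a `K`-linear MDS code with `k_L ≥ 3`, and any three distinct coordinates
`i, j, l`, the column spaces satisfy `V_l ∩ (V_i + V_j) = {0}`. -/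
theorem stmt_19 {K L : Type*} [Field K] [Field L] [Algebra K L]
    [Fintype K] [Fintype L] [DecidableEq L] {m n k d kL : ℕ}
    (hproper : ∃ ω : L, ω ∉ Set.range (algebraMap K L))
    (hn : 0 < n) (b : Module.Basis (Fin m) K L)
    (C : Submodule K (Fin n → L)) (c : Fin k → (Fin n → L))
    (hli : LinearIndependent K c) (hspan : Submodule.span K (Set.range c) = C)
    (hd_le : ∀ u ∈ C, u ≠ 0 → d ≤ hammingNorm u)
    (hd_eq : ∃ u ∈ C, u ≠ 0 ∧ hammingNorm u = d)
    (hkL : kL = n - d + 1) (hk : k = kL * m) (hkL3 : 3 ≤ kL)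
    (hMDS : Nat.card C = Fintype.card L ^ kL) :
    ∀ i j l : Fin n, i ≠ j → i ≠ l → j ≠ l →
      columnSpace b c l ⊓ (columnSpace b c i ⊔ columnSpace b c j) = ⊥ := by
  classical
  intro i j l hij hil hjl
  -- basic numerology
  obtain ⟨u0, hu0C, hu0ne, hu0norm⟩ := hd_eq
  have hd1 : 1 ≤ d := by
    rcases Nat.eq_zero_or_pos d with h | h
    · exact absurd (hammingNorm_eq_zero.mp (hu0norm.trans h)) hu0ne
    · exact h
  have hdn : d ≤ n := by
    have := hammingNorm_le_card_fintype (x := u0)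
    simpa [hu0norm] using this
  have hkLn : kL ≤ n := by omega
  -- a codeword vanishing on a set of kL coordinates is zero
  have hvanish : ∀ (S : Finset (Fin n)), S.card = kL →
      ∀ u ∈ C, (∀ s ∈ S, u s = 0) → u = 0 := by
    intro S hScard u huC hzero
    by_contra hne
    have hle : d ≤ hammingNorm u := hd_le u huC hne
    have hsub : (Finset.univ.filter fun p => u p ≠ 0) ⊆ Sᶜ := by
      intro p hp
      simp only [Finset.mem_filter] at hp
      simp only [Finset.mem_compl]
      intro hpS
      exact hp.2 (hzero p hpS)
    have hcard : hammingNorm u ≤ n - kL := by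
      have := Finset.card_le_card hsub
      simpa [hammingNorm, Finset.card_compl, hScard] using this
    omega
  -- choose S ⊇ {i, j, l} with card kL
  have hijl : ({i, j, l} : Finset (Fin n)).card = 3 := by
    rw [Finset.card_insert_of_notMem (by simp [hij, hil]),
      Finset.card_insert_of_notMem (by simp [hjl]), Finset.card_singleton]
  obtain ⟨S, hSsub, -, hScard⟩ :=
    Finset.exists_subsuperset_card_eq (s := ({i, j, l} : Finset (Fin n)))
      (t := (Finset.univ : Finset (Fin n))) (n := kL)
      (Finset.subset_univ _) (by rw [hijl]; omega) (by simpa using hkLn)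
  have hiS : i ∈ S := hSsub (by simp)
  have hjS : j ∈ S := hSsub (by simp)
  have hlS : l ∈ S := hSsub (by simp)
  -- the restriction map C → (S → L) is bijective
  let π : C → (S → L) := fun u s => (u : Fin n → L) s
  have hπinj : Function.Injective π := by
    intro u v huv
    have h0 : ((u : Fin n → L) - v) = 0 := by
      apply hvanish S hScard _ (C.sub_mem u.2 v.2)
      intro s hs
      have := congrFun huv ⟨s, hs⟩
      simpa [π, Pi.sub_apply, sub_eq_zero] using this
    exact Subtype.ext (by rwa [sub_eq_zero] at h0)
  have hπbij : Function.Bijective π := by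
    rw [Nat.bijective_iff_injective_and_card]
    refine ⟨hπinj, ?_⟩
    rw [hMDS, Nat.card_fun]
    simp [Nat.card_eq_fintype_card, hScard]
  -- surjectivity onto the three coordinates
  have hsurj : ∀ x y z : L, ∃ u ∈ C, u i = x ∧ u j = y ∧ u l = z := by
    intro x y z
    set v : S → L := fun s =>
      if (s : Fin n) = i then x else if (s : Fin n) = j then y else
        if (s : Fin n) = l then z else 0 with hv
    obtain ⟨u, hu⟩ := hπbij.2 v
    refine ⟨u, u.2, ?_, ?_, ?_⟩
    · have := congrFun hu ⟨i, hiS⟩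
      simpa [π, v] using this
    · have := congrFun hu ⟨j, hjS⟩
      simpa [π, v, Ne.symm hij] using this
    · have := congrFun hu ⟨l, hlS⟩
      simpa [π, v, Ne.symm hil, Ne.symm hjl] using this
  -- column generators
  set w : Fin n → Fin m → (Fin k → K) :=
    fun p t => fun r : Fin k => b.repr (c r p) t with hw
  -- key independence statement
  have hindep : ∀ (a bb cc : Fin m → K),
      ((∑ t, a t • w i t) + (∑ t, bb t • w j t) + (∑ t, cc t • w l t) = 0) →
      a = 0 ∧ bb = 0 ∧ cc = 0 := by
    intro a bb cc hrel
    set fa : L →ₗ[K] K := ∑ t, a t • b.coord t with hfa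
    set fb : L →ₗ[K] K := ∑ t, bb t • b.coord t with hfb
    set fc : L →ₗ[K] K := ∑ t, cc t • b.coord t with hfc
    have heval : ∀ r : Fin k, fa (c r i) + fb (c r j) + fc (c r l) = 0 := by
      intro r
      have := congrFun hrel r
      simpa [fa, fb, fc, w, LinearMap.sum_apply, LinearMap.smul_apply,
        Module.Basis.coord_apply, Finset.sum_apply, Pi.smul_apply, smul_eq_mul] using this
    set g : (Fin n → L) →ₗ[K] K :=
      fa.comp (LinearMap.proj i) + fb.comp (LinearMap.proj j) + fc.comp (LinearMap.proj l)
      with hg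
    have hgC : ∀ u ∈ C, g u = 0 := by
      intro u huC
      have : C ≤ LinearMap.ker g := by
        rw [← hspan, Submodule.span_le]
        rintro _ ⟨r, rfl⟩
        simpa [g, LinearMap.mem_ker] using heval r
      exact this huC
    have hall : ∀ x y z : L, fa x + fb y + fc z = 0 := by
      intro x y z
      obtain ⟨u, huC, hux, huy, huz⟩ := hsurj x y z
      have := hgC u huC
      simpa [g, hux, huy, huz] using this
    have hfa0 : ∀ x : L, fa x = 0 := fun x => by
      have := hall x 0 0; simpa using this
    have hfb0 : ∀ y : L, fb y = 0 := fun y => by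
      have := hall 0 y 0; simpa using this
    have hfc0 : ∀ z : L, fc z = 0 := fun z => by
      have := hall 0 0 z; simpa using this
    have key : ∀ (e : Fin m → K), (∀ x : L, (∑ t, e t • b.coord t) x = 0) → e = 0 := by
      intro e he
      funext t
      have := he (b t)
      simpa [LinearMap.sum_apply, LinearMap.smul_apply, Module.Basis.coord_apply,
        Module.Basis.repr_self, Finsupp.single_apply, smul_eq_mul, Finset.sum_ite_eq',
        eq_comm] using this
    exact ⟨key a hfa0, key bb hfb0, key cc hfc0⟩
  -- conclude
  rw [Submodule.eq_bot_iff]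
  intro x hx
  obtain ⟨hxl, hxij⟩ := Submodule.mem_inf.mp hx
  have hxl' : x ∈ Submodule.span K (Set.range (w l)) := hxl
  obtain ⟨cc, hcc⟩ := (Submodule.mem_span_range_iff_exists_fun K).mp hxl'
  obtain ⟨y, hy, z, hz, hyz⟩ := Submodule.mem_sup.mp hxij
  have hy' : y ∈ Submodule.span K (Set.range (w i)) := hy
  have hz' : z ∈ Submodule.span K (Set.range (w j)) := hz
  obtain ⟨a, ha⟩ := (Submodule.mem_span_range_iff_exists_fun K).mp hy'
  obtain ⟨bb, hbb⟩ := (Submodule.mem_span_range_iff_exists_fun K).mp hz'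
  have hrel : (∑ t, a t • w i t) + (∑ t, bb t • w j t) + (∑ t, (-cc) t • w l t) = 0 := by
    have : (∑ t, (-cc) t • w l t) = -x := by
      rw [← hcc]
      simp [neg_smul, Finset.sum_neg_distrib]
    rw [this, ha, hbb, hyz]
    abel
  have hcc0 : -cc = 0 := (hindep a bb (-cc) hrel).2.2
  have : cc = 0 := by simpa [neg_eq_zero] using hcc0
  rw [← hcc, this]
  simp
end
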